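/- The function g(y) = ((1 + y^2)/y)·arctan(y) is strictly increasing on (0, ∞), and tends to 1 as y → 0⁺ and to +∞ as y → +∞. Consequently, for every c > 0 and every λ < -c there exists a unique y > 0 such that c·arctan(y) = -λ·y/(1 + y^2), and no such y > 0 exists when λ ≥ -c. -/

import Mathlib

open Real Set Filter

-- arctan y < y for y > 0, and y/(1+y^2) < arctan y for y > 0
lemma aux_arctan_lt_self {y : ℝ} (hy : 0 < y) : arctan y < y := by
  have h : StrictMonoOn (fun x : ℝ => x - arctan x) (Ici 0) := by
    apply strictMonoOn_of_deriv_pos (convex_Ici 0)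
    · exact (continuous_id.sub continuous_arctan).continuousOn
    · intro x hx
      rw [interior_Ici] at hx
      have hd : HasDerivAt (fun x : ℝ => x - arctan x) (1 - 1/(1+x^2)) x :=
        (hasDerivAt_id x).sub (hasDerivAt_arctan x)
      rw [hd.deriv]
      have h1 : (1:ℝ) < 1 + x^2 := by nlinarith [hx.out]
      have : 1/(1+x^2) < 1 := by
        rw [div_lt_one (by linarith)]; exact h1
      linarith
  have := h (self_mem_Ici) (le_of_lt hy) hy
  simpa [arctan_zero] using this

lemma aux_lower {y : ℝ} (hy : 0 < y) : y / (1 + y^2) < arctan y := by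
  have h : StrictMonoOn (fun x : ℝ => arctan x - x / (1 + x^2)) (Ici 0) := by
    apply strictMonoOn_of_deriv_pos (convex_Ici 0)
    · apply (continuous_arctan.sub (continuous_id.div (by continuity) (fun x => by positivity))).continuousOn
    · intro x hx
      rw [interior_Ici] at hx
      have hx0 : (0:ℝ) < x := hx
      have hne : (1 + x^2) ≠ 0 := by positivity
      have hd : HasDerivAt (fun x : ℝ => arctan x - x / (1 + x^2))
          (1/(1+x^2) - (1 * (1+x^2) - x * (2*x)) / (1+x^2)^2) x := by
        apply (hasDerivAt_arctan x).sub
        have hp : HasDerivAt (fun x:ℝ => 1 + x^2) (2*x) x := by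
          simpa using (hasDerivAt_pow 2 x).const_add 1
        exact (hasDerivAt_id x).div hp hne
      rw [hd.deriv]
      have h2 : (0:ℝ) < (1+x^2)^2 := by positivity
      rw [div_sub_div _ _ hne (ne_of_gt h2)]
      apply div_pos _ (by positivity)
      nlinarith
  have := h (self_mem_Ici) (le_of_lt hy) hy
  simpa [arctan_zero] using this

lemma aux_gt_one {y : ℝ} (hy : 0 < y) : 1 < ((1 + y^2)/y) * arctan y := by
  have h := aux_lower hy
  have h1 : (0:ℝ) < 1 + y^2 := by positivity
  rw [div_mul_eq_mul_div, lt_div_iff₀ hy]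
  calc 1 * y = (1+y^2) * (y/(1+y^2)) := by field_simp
  _ < (1+y^2) * arctan y := by exact mul_lt_mul_of_pos_left h h1

lemma aux_deriv {y : ℝ} (hy : 0 < y) :
    HasDerivAt (fun y : ℝ => ((1 + y ^ 2) / y) * arctan y)
      (((2*y) * y - (1+y^2) * 1) / y^2 * arctan y + (1+y^2)/y * (1/(1+y^2))) y := by
  apply HasDerivAt.mul _ (hasDerivAt_arctan y)
  have hp : HasDerivAt (fun y:ℝ => 1 + y^2) (2*y) y := by
    simpa using (hasDerivAt_pow 2 y).const_add 1
  have := hp.div (hasDerivAt_id' y) hy.ne'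
  exact this

lemma aux_mono : StrictMonoOn (fun y : ℝ => ((1 + y ^ 2) / y) * arctan y) (Ioi 0) := by
  apply strictMonoOn_of_deriv_pos (convex_Ioi 0)
  · intro x hx
    exact ((aux_deriv hx).continuousAt).continuousWithinAt
  · intro x hx
    rw [interior_Ioi] at hx
    have hx0 : (0:ℝ) < x := hx
    rw [(aux_deriv hx0).deriv]
    have ha : arctan x < x := aux_arctan_lt_self hx0
    have hb : 0 < arctan x := by
      rw [← arctan_zero]; exact arctan_strictMono hx0
    have h1 : (1+x^2)/x * (1/(1+x^2)) = 1/x := by field_simp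
    rw [h1]
    rcases le_or_gt 1 x with h | h
    · have : 0 ≤ ((2*x)*x - (1+x^2)*1) / x^2 := by
        apply div_nonneg _ (by positivity); nlinarith
      nlinarith [mul_nonneg this hb.le, one_div_pos.mpr hx0]
    · have h2 : ((2*x)*x - (1+x^2)*1) / x^2 * arctan x ≥ ((2*x)*x - (1+x^2)*1) / x^2 * x := by
        apply mul_le_mul_of_nonpos_left ha.le
        apply div_nonpos_of_nonpos_of_nonneg _ (by positivity); nlinarith
      have h3 : ((2*x)*x - (1+x^2)*1) / x^2 * x + 1/x = x := by field_simp; ring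
      nlinarith

lemma aux_t0 : Tendsto (fun y : ℝ => ((1 + y ^ 2) / y) * arctan y) (nhdsWithin 0 (Ioi 0)) (nhds 1) := by
  have h1 : Tendsto (fun y : ℝ => arctan y / y) (nhdsWithin 0 (Ioi 0)) (nhds 1) := by
    have h := hasDerivAt_iff_tendsto_slope.mp (hasDerivAt_arctan 0)
    simp only [pow_two, mul_zero, add_zero, div_one] at h
    have h' := h.mono_left (nhdsWithin_mono 0 (fun y (hy : y ∈ Ioi 0) => ne_of_gt hy))
    refine h'.congr' ?_
    filter_upwards [self_mem_nhdsWithin] with y hy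
    simp [slope_def_field, arctan_zero]
  have h2 : Tendsto (fun y : ℝ => 1 + y ^ 2) (nhdsWithin 0 (Ioi 0)) (nhds 1) := by
    have : Tendsto (fun y : ℝ => 1 + y ^ 2) (nhds 0) (nhds (1 + 0 ^ 2)) :=
      (continuous_const.add (continuous_pow 2)).tendsto 0
    simpa using this.mono_left nhdsWithin_le_nhds
  have h3 := h2.mul h1
  rw [mul_one] at h3
  refine h3.congr' ?_
  filter_upwards [self_mem_nhdsWithin] with y (hy : y ∈ Ioi 0)
  have : y ≠ 0 := ne_of_gt hy
  field_simp

lemma aux_ttop : Tendsto (fun y : ℝ => ((1 + y ^ 2) / y) * arctan y) atTop atTop := by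
  have hev : (fun y : ℝ => y * (π/4)) ≤ᶠ[atTop] fun y : ℝ => ((1 + y ^ 2) / y) * arctan y := by
    filter_upwards [eventually_ge_atTop 1] with y hy
    have hy0 : (0:ℝ) < y := lt_of_lt_of_le one_pos hy
    have h1 : y ≤ (1 + y^2)/y := by rw [le_div_iff₀ hy0]; nlinarith
    have h2 : π/4 ≤ arctan y := by
      rw [← arctan_one]; exact arctan_strictMono.monotone hy
    exact mul_le_mul h1 h2 (by positivity) (by positivity)
  exact tendsto_atTop_mono' atTop hev (Tendsto.atTop_mul_const (by positivity) tendsto_id)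

lemma aux_equiv {c lam y : ℝ} (hc : 0 < c) (hy : 0 < y) :
    (c * arctan y = -lam * y / (1 + y ^ 2)) ↔ ((1 + y ^ 2) / y) * arctan y = -lam / c := by
  rw [eq_div_iff (by positivity : (1 + y^2 : ℝ) ≠ 0), eq_div_iff hc.ne',
    div_mul_eq_mul_div, div_mul_eq_mul_div, div_eq_iff hy.ne']
  constructor <;> intro h <;> linear_combination h

theorem stmt_1 :
    StrictMonoOn (fun y : ℝ => ((1 + y ^ 2) / y) * arctan y) (Ioi 0) ∧
    Tendsto (fun y : ℝ => ((1 + y ^ 2) / y) * arctan y) (nhdsWithin 0 (Ioi 0)) (nhds 1) ∧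
    Tendsto (fun y : ℝ => ((1 + y ^ 2) / y) * arctan y) atTop atTop ∧
    (∀ c lam : ℝ, 0 < c →
      (lam < -c → ∃! y : ℝ, 0 < y ∧ c * arctan y = -lam * y / (1 + y ^ 2)) ∧
      (-c ≤ lam → ¬ ∃ y : ℝ, 0 < y ∧ c * arctan y = -lam * y / (1 + y ^ 2))) := by
  refine ⟨aux_mono, aux_t0, aux_ttop, fun c lam hc => ⟨?_, ?_⟩⟩
  · intro hlam
    have ht : 1 < -lam / c := (one_lt_div hc).mpr (by linarith)
    obtain ⟨a, ha1, ha2⟩ : ∃ a : ℝ, 0 < a ∧ ((1 + a ^ 2) / a) * arctan a < -lam / c := by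
      have h1 := aux_t0.eventually (gt_mem_nhds ht)
      have h2 : ∀ᶠ y in nhdsWithin 0 (Ioi (0:ℝ)), 0 < y :=
        eventually_mem_nhdsWithin
      exact (h2.and h1).exists
    obtain ⟨b, hb1, hb2⟩ : ∃ b : ℝ, a ≤ b ∧ -lam / c < ((1 + b ^ 2) / b) * arctan b := by
      obtain ⟨b, hb1, hb2⟩ := ((eventually_ge_atTop a).and (aux_ttop.eventually_gt_atTop (-lam/c))).exists
      exact ⟨b, hb1, hb2⟩
    have hcont : ContinuousOn (fun y : ℝ => ((1 + y ^ 2) / y) * arctan y) (Icc a b) :=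
      fun x hx => ((aux_deriv (lt_of_lt_of_le ha1 hx.1)).continuousAt).continuousWithinAt
    obtain ⟨y, hy, hgy⟩ := intermediate_value_Icc hb1 hcont ⟨ha2.le, hb2.le⟩
    have hy0 : 0 < y := lt_of_lt_of_le ha1 hy.1
    refine ⟨y, ⟨hy0, (aux_equiv hc hy0).mpr hgy⟩, ?_⟩
    rintro z ⟨hz0, hez⟩
    have : ((1 + z ^ 2) / z) * arctan z = ((1 + y ^ 2) / y) * arctan y :=
      ((aux_equiv hc hz0).mp hez).trans hgy.symm
    exact aux_mono.injOn (mem_Ioi.mpr hz0) (mem_Ioi.mpr hy0) this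
  · rintro hlam ⟨y, hy0, heq⟩
    have h1 := (aux_equiv hc hy0).mp heq
    have h2 := aux_gt_one hy0
    have : -lam / c ≤ 1 := by
      rw [div_le_one hc]; linarith
    rw [h1] at h2
    linarith
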